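/- For x, y, z in Q_{n-1}, the associator in Q_n satisfies [(x,0),(y,0),(z,1)] = [x,y]·[z,y,x], where [·,·] is the commutator and [·,·,·] the associator in Q_{n-1}. -/

import Mathlib

/-- The underlying set of the Cayley-Dickson loop `Q n`:
`Q 0 = {±1}` (encoded as `Bool`, `false = 1`, `true = -1`) and `Q (n+1) = Q n × Bool`,
an element `(x, b)` encoding `(x, 0)` if `b = false` and `(x, 1)` if `b = true`. -/
def Q : ℕ → Type
  | 0 => Bool
  | n+1 => Q n × Bool

namespace Q

def one : ∀ n, Q n
  | 0 => false
  | n+1 => (one n, false)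

def neg : ∀ n, Q n → Q n
  | 0, x => !x
  | n+1, (x, b) => (neg n x, b)

def conj : ∀ n, Q n → Q n
  | 0, x => x
  | n+1, (x, false) => (conj n x, false)
  | n+1, (x, true) => (neg n x, true)

/-- Cayley-Dickson doubling multiplication restricted to the loop:
`(x,0)(y,0) = (xy,0)`, `(x,0)(y,1) = (yx,1)`, `(x,1)(y,0) = (xy*,1)`, `(x,1)(y,1) = (-y*x,0)`. -/
def mul : ∀ n, Q n → Q n → Q n
  | 0, x, y => xor x y
  | n+1, (x, false), (y, false) => (mul n x y, false)
  | n+1, (x, false), (y, true)  => (mul n y x, true)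
  | n+1, (x, true),  (y, false) => (mul n x (conj n y), true)
  | n+1, (x, true),  (y, true)  => (neg n (mul n (conj n y) x), false)

instance (n : ℕ) : One (Q n) := ⟨one n⟩
instance (n : ℕ) : Neg (Q n) := ⟨neg n⟩
instance (n : ℕ) : Mul (Q n) := ⟨mul n⟩
instance (n : ℕ) : Star (Q n) := ⟨conj n⟩
/-- In `Q n` the inverse of `x` is its conjugate `x*`. -/
instance (n : ℕ) : Inv (Q n) := ⟨conj n⟩

instance instDecEq : ∀ n, DecidableEq (Q n)
  | 0 => inferInstanceAs (DecidableEq Bool)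
  | n+1 => letI := instDecEq n; inferInstanceAs (DecidableEq (Q n × Bool))

instance instFintype : ∀ n, Fintype (Q n)
  | 0 => inferInstanceAs (Fintype Bool)
  | n+1 => letI := instFintype n; inferInstanceAs (Fintype (Q n × Bool))

/-- Powers in `Q n` (well defined by diassociativity). -/
def pow {n : ℕ} (x : Q n) : ℕ → Q n
  | 0 => 1
  | k+1 => x * pow x k

/-- The embedding `x ↦ (x, 0)` of `Q n` into `Q (n+1)`. -/
def up {n : ℕ} (x : Q n) : Q (n+1) := (x, false)

/-- The map `x ↦ (x, 1)` from `Q n` into `Q (n+1)`. -/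
def up1 {n : ℕ} (x : Q n) : Q (n+1) := (x, true)

/-- The commutator `[x,y]`, defined by `xy = (yx)[x,y]`. -/
def comm {n : ℕ} (x y : Q n) : Q n := (y * x)⁻¹ * (x * y)

/-- The associator `[x,y,z]`, defined by `(xy)z = (x(yz))[x,y,z]`. -/
def assoc {n : ℕ} (x y z : Q n) : Q n := (x * (y * z))⁻¹ * ((x * y) * z)

/-- A subloop of the Cayley-Dickson loop `Q n`: a subset containing `1` and closed
under multiplication and inverses (= conjugates). -/
structure Subloop (n : ℕ) where
  carrier : Set (Q n)
  one_mem : (1 : Q n) ∈ carrier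
  mul_mem : ∀ ⦃x y : Q n⦄, x ∈ carrier → y ∈ carrier → x * y ∈ carrier
  inv_mem : ∀ ⦃x : Q n⦄, x ∈ carrier → x⁻¹ ∈ carrier

/-- The subloop of `Q n` generated by a set `s`. -/
def closure (n : ℕ) (s : Set (Q n)) : Set (Q n) :=
  ⋂₀ {t : Set (Q n) | s ⊆ t ∧ (1 : Q n) ∈ t ∧
      (∀ x ∈ t, ∀ y ∈ t, x * y ∈ t) ∧ (∀ x ∈ t, x⁻¹ ∈ t)}

end Q


namespace Q

lemma nneg : ∀ n (a : Q n), neg n (neg n a) = a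
  | 0, a => by simp [neg]; cases a <;> rfl
  | n+1, (a, b) => by simp [neg, nneg n a]; rfl

lemma conj_neg : ∀ n (a : Q n), conj n (neg n a) = neg n (conj n a)
  | 0, a => rfl
  | n+1, (a, false) => by simp [neg, conj, conj_neg n a]; rfl
  | n+1, (a, true) => by simp [neg, conj]; rfl

lemma conj_one : ∀ n, conj n (one n) = one n
  | 0 => rfl
  | n+1 => by simp [one, conj, conj_one n]; rfl

lemma one_mul' : ∀ n, (∀ a : Q n, mul n (one n) a = a) ∧ (∀ a : Q n, mul n a (one n) = a)
  | 0 => ⟨fun a => by simp [one, mul]; cases a <;> rfl, fun a => by simp [one, mul]; cases a <;> rfl⟩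
  | n+1 => by
    obtain ⟨h1, h2⟩ := one_mul' n
    constructor
    · rintro ⟨a, _ | _⟩ <;> simp [one, mul, h1, h2] <;> rfl
    · rintro ⟨a, _ | _⟩ <;> simp [one, mul, h1, h2, conj_one n] <;> rfl

lemma neg_mul' : ∀ n, (∀ a b : Q n, mul n (neg n a) b = neg n (mul n a b)) ∧
    (∀ a b : Q n, mul n a (neg n b) = neg n (mul n a b))
  | 0 => ⟨fun a b => by cases a <;> simp [neg, mul] <;> cases b <;> rfl, fun a b => by cases a <;> simp [neg, mul] <;> cases b <;> rfl⟩
  | n+1 => by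
    obtain ⟨h1, h2⟩ := neg_mul' n
    constructor
    · rintro ⟨a, _ | _⟩ ⟨b, _ | _⟩ <;> simp [neg, mul, h1, h2, nneg] <;> rfl
    · rintro ⟨a, _ | _⟩ ⟨b, _ | _⟩ <;> simp [neg, mul, h1, h2, nneg, conj_neg] <;> rfl

lemma conj_mul_self : ∀ n (a : Q n), mul n (conj n a) a = one n
  | 0, a => by simp [conj, mul, one]; cases a <;> rfl
  | n+1, (a, false) => by simp [conj, mul, one, conj_mul_self n a]; rfl
  | n+1, (a, true) => by
    simp [conj, mul, one, (neg_mul' n).2, conj_mul_self n a, nneg]; rfl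

lemma conj_or : ∀ n (a : Q n), conj n a = a ∨ conj n a = neg n a
  | 0, a => Or.inl rfl
  | n+1, (a, false) => by
    rcases conj_or n a with h | h <;> simp [conj, neg, h] <;> tauto
  | n+1, (a, true) => Or.inr rfl

lemma comm_or : ∀ n (a b : Q n), mul n a b = mul n b a ∨ mul n a b = neg n (mul n b a)
  | 0, a, b => Or.inl (Bool.xor_comm a b)
  | n+1, (a, false), (b, false) => by
    rcases comm_or n a b with h | h <;> simp [mul, neg, h] <;> tauto
  | n+1, (a, false), (b, true) => by
    rcases conj_or n a with h | h <;> simp [mul, neg, h, (neg_mul' n).2, nneg] <;> tauto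
  | n+1, (a, true), (b, false) => by
    rcases conj_or n b with h | h <;> simp [mul, neg, h, (neg_mul' n).2] <;> tauto
  | n+1, (a, true), (b, true) => by
    rcases conj_or n a with ha | ha <;> rcases conj_or n b with hb | hb <;>
      rcases comm_or n a b with hc | hc <;>
      simp [mul, neg, ha, hb, hc, (neg_mul' n).1, (neg_mul' n).2, nneg] <;> tauto

end Q

/-- For `x, y, z ∈ Q n`, the associator in `Q (n+1)` satisfies
`[(x,0),(y,0),(z,1)] = [x,y]·[z,y,x]`, where `[·,·]` is the commutator and `[·,·,·]`
the associator in `Q n`. -/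
theorem Q.assoc_up_up_up1 (n : ℕ) (x y z : Q n) :
    Q.assoc (Q.up x) (Q.up y) (Q.up1 z) = Q.up (Q.comm x y * Q.assoc z y x) := by
  have e1 : ∀ m (a b : Q m), a * b = Q.mul m a b := fun _ _ _ => rfl
  have e2 : ∀ m (a : Q m), a⁻¹ = Q.conj m a := fun _ _ => rfl
  simp only [Q.assoc, Q.comm, Q.up, Q.up1, e1, e2]
  erw [e1, e1, e1, e1]
  simp only [Q.mul, Q.conj]
  rw [(Q.neg_mul' n).2, Q.nneg]
  rcases Q.comm_or n x y with h | h
  · rw [h, Q.conj_mul_self, (Q.one_mul' n).1]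
  · rw [h, (Q.neg_mul' n).2, Q.conj_neg, (Q.neg_mul' n).1, (Q.neg_mul' n).2, Q.conj_mul_self,
      (Q.neg_mul' n).1, (Q.one_mul' n).1]
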